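/- Let p be an odd prime. Every nonzero quadratic form in three variables over F_p is equivalent under the action of GL(3, F_p) to exactly one of: y1^2, g·y1^2, y1^2+y2^2, g·y1^2+y2^2, y1^2+y2^2+y3^2, g·y1^2+y2^2+y3^2, where g is a fixed non-square unit of F_p. -/

import Mathlib

open Matrix

namespace QFClassify

variable {F : Type*} [Field F]

omit [Field F] in
lemma transpose_fin_three' (a b c d e f g h i : F) :
    (!![a,b,c;d,e,f;g,h,i])ᵀ = !![a,d,g;b,e,h;c,f,i] := by
  ext i j; fin_cases i <;> fin_cases j <;> rfl

/-- diagonal 3×3 matrix -/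
def dm (a b c : F) : Matrix (Fin 3) (Fin 3) F := !![a,0,0;0,b,0;0,0,c]

lemma dm_det (a b c : F) : (dm a b c).det = a * b * c := by
  simp [dm, Matrix.det_fin_three]

@[simp] lemma dm00 (a b c : F) : dm a b c 0 0 = a := rfl
@[simp] lemma dm01 (a b c : F) : dm a b c 0 1 = 0 := rfl
@[simp] lemma dm02 (a b c : F) : dm a b c 0 2 = 0 := rfl
@[simp] lemma dm10 (a b c : F) : dm a b c 1 0 = 0 := rfl
@[simp] lemma dm11 (a b c : F) : dm a b c 1 1 = b := rfl
@[simp] lemma dm12 (a b c : F) : dm a b c 1 2 = 0 := rfl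
@[simp] lemma dm20 (a b c : F) : dm a b c 2 0 = 0 := rfl
@[simp] lemma dm21 (a b c : F) : dm a b c 2 1 = 0 := rfl
@[simp] lemma dm22 (a b c : F) : dm a b c 2 2 = c := rfl

lemma dm_transpose (a b c : F) : (dm a b c)ᵀ = dm a b c := by
  rw [dm, transpose_fin_three']

/-- congruence of matrices -/
def Cong (M N : Matrix (Fin 3) (Fin 3) F) : Prop :=
  ∃ u : (Matrix (Fin 3) (Fin 3) F)ˣ, (u : Matrix (Fin 3) (Fin 3) F)ᵀ * M * u = N

lemma cong_of (M N C : Matrix (Fin 3) (Fin 3) F) (hd : C.det ≠ 0) (h : Cᵀ * M * C = N) :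
    Cong M N := by
  refine ⟨((Matrix.isUnit_iff_isUnit_det C).2 (isUnit_iff_ne_zero.2 hd)).unit, ?_⟩
  rwa [IsUnit.unit_spec]

lemma cong_trans {M N P : Matrix (Fin 3) (Fin 3) F} (h1 : Cong M N) (h2 : Cong N P) :
    Cong M P := by
  obtain ⟨u, hu⟩ := h1; obtain ⟨v, hv⟩ := h2
  exact ⟨u * v, by rw [Units.val_mul, Matrix.transpose_mul, ← hv, ← hu]; noncomm_ring⟩

lemma cong_swap01 (a b c : F) : Cong (dm a b c) (dm b a c) := by
  refine cong_of _ _ !![0,1,0;1,0,0;0,0,1] (by simp [Matrix.det_fin_three]) ?_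
  rw [transpose_fin_three', dm, dm, Matrix.mul_fin_three, Matrix.mul_fin_three]
  ext i j; fin_cases i <;> fin_cases j <;> simp [Matrix.vecHead, Matrix.vecTail]

lemma cong_swap12 (a b c : F) : Cong (dm a b c) (dm a c b) := by
  refine cong_of _ _ !![1,0,0;0,0,1;0,1,0] (by simp [Matrix.det_fin_three]) ?_
  rw [transpose_fin_three', dm, dm, Matrix.mul_fin_three, Matrix.mul_fin_three]
  ext i j; fin_cases i <;> fin_cases j <;> simp [Matrix.vecHead, Matrix.vecTail]

lemma cong_scale (a b c s t u : F) (hs : s ≠ 0) (ht : t ≠ 0) (hu : u ≠ 0) :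
    Cong (dm a b c) (dm (a*s^2) (b*t^2) (c*u^2)) := by
  refine cong_of _ _ !![s,0,0;0,t,0;0,0,u] (by simp [Matrix.det_fin_three, hs, ht, hu]) ?_
  rw [transpose_fin_three', dm, dm, Matrix.mul_fin_three, Matrix.mul_fin_three]
  ext i j; fin_cases i <;> fin_cases j <;> simp [Matrix.vecHead, Matrix.vecTail] <;> ring

lemma cong_pair01 (a b c x y : F) (h : a*x^2 + b*y^2 = 1) :
    Cong (dm a b c) (dm 1 (a*b) c) := by
  have hdet : (!![x,-(b*y),0;y,a*x,0;0,0,1] : Matrix (Fin 3) (Fin 3) F).det = 1 := by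
    simp [Matrix.det_fin_three]; linear_combination h
  refine cong_of _ _ _ (by rw [hdet]; exact one_ne_zero) ?_
  rw [transpose_fin_three', dm, dm, Matrix.mul_fin_three, Matrix.mul_fin_three]
  ext i j; fin_cases i <;> fin_cases j <;> simp [Matrix.vecHead, Matrix.vecTail] <;>
    first | ring1 | linear_combination h | linear_combination a*b*h |
      linear_combination -h | linear_combination -(a*b)*h

lemma cong_pair12 (a b c x y : F) (h : b*x^2 + c*y^2 = 1) :
    Cong (dm a b c) (dm a 1 (b*c)) := by
  have hdet : (!![1,0,0;0,x,-(c*y);0,y,b*x] : Matrix (Fin 3) (Fin 3) F).det = 1 := by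
    simp [Matrix.det_fin_three]; linear_combination h
  refine cong_of _ _ _ (by rw [hdet]; exact one_ne_zero) ?_
  rw [transpose_fin_three', dm, dm, Matrix.mul_fin_three, Matrix.mul_fin_three]
  ext i j; fin_cases i <;> fin_cases j <;> simp [Matrix.vecHead, Matrix.vecTail] <;>
    first | ring1 | linear_combination h | linear_combination b*c*h |
      linear_combination -h | linear_combination -(b*c)*h

/-- the six target diagonal matrices -/
def DM (gv : F) : Fin 6 → Matrix (Fin 3) (Fin 3) F :=
  ![dm 1 0 0, dm gv 0 0, dm 1 1 0, dm gv 1 0, dm 1 1 1, dm gv 1 1]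

lemma entry_spec (C M N : Matrix (Fin 3) (Fin 3) F) (h : Cᵀ * M * C = N) (i j : Fin 3) :
    C 0 i * M 0 0 * C 0 j + C 0 i * M 0 1 * C 1 j + C 0 i * M 0 2 * C 2 j
  + (C 1 i * M 1 0 * C 0 j + C 1 i * M 1 1 * C 1 j + C 1 i * M 1 2 * C 2 j)
  + (C 2 i * M 2 0 * C 0 j + C 2 i * M 2 1 * C 1 j + C 2 i * M 2 2 * C 2 j) = N i j := by
  rw [← h]
  simp [Matrix.mul_apply, Fin.sum_univ_three]
  ring

lemma quad_congr (P N : Matrix (Fin 3) (Fin 3) F) (v : Fin 3 → F) :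
    v ⬝ᵥ ((Pᵀ * N * P) *ᵥ v) = (P *ᵥ v) ⬝ᵥ (N *ᵥ (P *ᵥ v)) := by
  rw [← Matrix.mulVec_mulVec, ← Matrix.mulVec_mulVec, Matrix.dotProduct_mulVec,
    Matrix.vecMul_transpose]

lemma det_rel {C M N : Matrix (Fin 3) (Fin 3) F} (h : Cᵀ * M * C = N) :
    C.det ^ 2 * M.det = N.det := by
  have h2 := congrArg Matrix.det h
  rw [Matrix.det_mul, Matrix.det_mul, Matrix.det_transpose] at h2
  linear_combination h2

/-- symmetric matrices with equal quadratic values are equal (char ≠ 2) -/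
lemma sym_eq {S T : Matrix (Fin 3) (Fin 3) F} (h2 : (2:F) ≠ 0) (hS : Sᵀ = S) (hT : Tᵀ = T)
    (h : ∀ v : Fin 3 → F, v ⬝ᵥ (S *ᵥ v) = v ⬝ᵥ (T *ᵥ v)) : S = T := by
  have s01 := congrFun (congrFun hS 0) 1
  have s02 := congrFun (congrFun hS 0) 2
  have s12 := congrFun (congrFun hS 1) 2
  have t01 := congrFun (congrFun hT 0) 1
  have t02 := congrFun (congrFun hT 0) 2
  have t12 := congrFun (congrFun hT 1) 2
  rw [Matrix.transpose_apply] at s01 s02 s12 t01 t02 t12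
  have h1 := h ![1,0,0]
  have h2' := h ![0,1,0]
  have h3 := h ![0,0,1]
  have h4 := h ![1,1,0]
  have h5 := h ![1,0,1]
  have h6 := h ![0,1,1]
  simp [dotProduct, Matrix.mulVec, Fin.sum_univ_three, Matrix.vecHead,
    Matrix.vecTail] at h1 h2' h3 h4 h5 h6
  have e01 : S 0 1 = T 0 1 := by
    apply mul_left_cancel₀ h2
    linear_combination h4 - h1 - h2' - s01 + t01
  have e02 : S 0 2 = T 0 2 := by
    apply mul_left_cancel₀ h2
    linear_combination h5 - h1 - h3 - s02 + t02
  have e12 : S 1 2 = T 1 2 := by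
    apply mul_left_cancel₀ h2
    linear_combination h6 - h2' - h3 - s12 + t12
  ext i j
  fin_cases i <;> fin_cases j
  · exact h1
  · exact e01
  · exact e02
  · exact s01.trans (e01.trans t01.symm)
  · exact h2'
  · exact e12
  · exact s02.trans (e02.trans t02.symm)
  · exact s12.trans (e12.trans t12.symm)
  · exact h3

section contra

variable {gv : F} (hgv : gv ≠ 0) (hg : ¬ IsSquare gv)

/-- rank 1 to rank ≥ 2 (first two diagonal entries of target nonzero resp. 1) contradiction -/
lemma nc_1r (a e z : F) (he : e ≠ 0) (C : Matrix (Fin 3) (Fin 3) F)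
    (h : Cᵀ * dm a 0 0 * C = dm e 1 z) : False := by
  have e00 := entry_spec C _ _ h 0 0
  have e01 := entry_spec C _ _ h 0 1
  have e11 := entry_spec C _ _ h 1 1
  simp only [dm00, dm01, dm02, dm10, dm11, dm12, dm20, dm21, dm22] at e00 e01 e11
  exact he (by linear_combination (a*(C 0 0)*(C 0 1))*e01 - e00 - (a*(C 0 0)^2)*e11)

/-- rank 2 to rank 1 contradiction -/
lemma nc_21 (a b e : F) (ha : a ≠ 0) (hb : b ≠ 0) (he : e ≠ 0)
    (C : Matrix (Fin 3) (Fin 3) F) (hd : C.det ≠ 0)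
    (h : Cᵀ * dm a b 0 * C = dm e 0 0) : False := by
  have e00 := entry_spec C _ _ h 0 0
  have e01 := entry_spec C _ _ h 0 1
  have e02 := entry_spec C _ _ h 0 2
  have e11 := entry_spec C _ _ h 1 1
  have e22 := entry_spec C _ _ h 2 2
  simp only [dm00, dm01, dm02, dm10, dm11, dm12, dm20, dm21, dm22] at e00 e01 e02 e11 e22
  have hx1 : C 0 1 = 0 := by
    have key : e * a * (C 0 1)^2 = 0 := by
      linear_combination (a*(C 0 0)*(C 0 1) - b*(C 1 0)*(C 1 1))*e01
        + b*(C 1 0)^2*e11 - a*(C 0 1)^2*e00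
    by_contra hne
    exact mul_ne_zero (mul_ne_zero he ha) (pow_ne_zero 2 hne) key
  have hy1 : C 1 1 = 0 := by
    have key : b * (C 1 1)^2 = 0 := by
      linear_combination e11 - (a*(C 0 1))*hx1
    by_contra hne
    exact mul_ne_zero hb (pow_ne_zero 2 hne) key
  have hx2 : C 0 2 = 0 := by
    have key : e * a * (C 0 2)^2 = 0 := by
      linear_combination (a*(C 0 0)*(C 0 2) - b*(C 1 0)*(C 1 2))*e02
        + b*(C 1 0)^2*e22 - a*(C 0 2)^2*e00
    by_contra hne
    exact mul_ne_zero (mul_ne_zero he ha) (pow_ne_zero 2 hne) key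
  have hy2 : C 1 2 = 0 := by
    have key : b * (C 1 2)^2 = 0 := by
      linear_combination e22 - (a*(C 0 2))*hx2
    by_contra hne
    exact mul_ne_zero hb (pow_ne_zero 2 hne) key
  apply hd
  rw [Matrix.det_fin_three, hx1, hx2, hy1, hy2]
  ring

include hg in
lemma nc_23 (C : Matrix (Fin 3) (Fin 3) F)
    (h : Cᵀ * dm 1 1 0 * C = dm gv 1 0) : False := by
  have e00 := entry_spec C _ _ h 0 0
  have e01 := entry_spec C _ _ h 0 1
  have e11 := entry_spec C _ _ h 1 1
  simp only [dm00, dm01, dm02, dm10, dm11, dm12, dm20, dm21, dm22] at e00 e01 e11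
  exact hg ⟨C 0 0 * C 1 1 - C 0 1 * C 1 0,
    by linear_combination (-((C 0 1)^2 + (C 1 1)^2))*e00 - gv*e11
        + (C 0 0 * C 0 1 + C 1 0 * C 1 1)*e01⟩

include hg in
lemma nc_32 (C : Matrix (Fin 3) (Fin 3) F)
    (h : Cᵀ * dm gv 1 0 * C = dm 1 1 0) : False := by
  have e00 := entry_spec C _ _ h 0 0
  have e01 := entry_spec C _ _ h 0 1
  have e11 := entry_spec C _ _ h 1 1
  simp only [dm00, dm01, dm02, dm10, dm11, dm12, dm20, dm21, dm22] at e00 e01 e11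
  have hgd : gv * (C 0 0 * C 1 1 - C 0 1 * C 1 0)^2 = 1 := by
    linear_combination (gv*(C 0 1)^2 + (C 1 1)^2)*e00 + e11
      - (gv*(C 0 0)*(C 0 1) + (C 1 0)*(C 1 1))*e01
  have hd0 : C 0 0 * C 1 1 - C 0 1 * C 1 0 ≠ 0 := by
    intro h0
    apply one_ne_zero (α := F)
    rw [← hgd, h0]; ring
  refine hg ⟨(C 0 0 * C 1 1 - C 0 1 * C 1 0)⁻¹, ?_⟩
  field_simp
  linear_combination hgd

include hg in
lemma nc_01 (C : Matrix (Fin 3) (Fin 3) F)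
    (h : Cᵀ * dm 1 0 0 * C = dm gv 0 0) : False := by
  have e00 := entry_spec C _ _ h 0 0
  simp only [dm00, dm01, dm02, dm10, dm11, dm12, dm20, dm21, dm22] at e00
  exact hg ⟨C 0 0, by linear_combination -e00⟩

include hg in
lemma nc_10 (C : Matrix (Fin 3) (Fin 3) F)
    (h : Cᵀ * dm gv 0 0 * C = dm 1 0 0) : False := by
  have e00 := entry_spec C _ _ h 0 0
  simp only [dm00, dm01, dm02, dm10, dm11, dm12, dm20, dm21, dm22] at e00
  have hC0 : C 0 0 ≠ 0 := by
    intro h0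
    apply one_ne_zero (α := F)
    linear_combination -e00 + gv*(C 0 0)*h0 + gv*(C 0 0)*h0 - gv*(C 0 0)*h0
  refine hg ⟨(C 0 0)⁻¹, ?_⟩
  field_simp
  linear_combination e00

include hg in
lemma nc_45 (C : Matrix (Fin 3) (Fin 3) F)
    (h : Cᵀ * dm 1 1 1 * C = dm gv 1 1) : False := by
  have hr := det_rel h
  rw [dm_det, dm_det] at hr
  exact hg ⟨C.det, by linear_combination -hr⟩

include hg in
lemma nc_54 (C : Matrix (Fin 3) (Fin 3) F) (hd : C.det ≠ 0)
    (h : Cᵀ * dm gv 1 1 * C = dm 1 1 1) : False := by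
  have hr := det_rel h
  rw [dm_det, dm_det] at hr
  refine hg ⟨(C.det)⁻¹, ?_⟩
  field_simp
  linear_combination hr

lemma nc_d0 {C M N : Matrix (Fin 3) (Fin 3) F} (hd : C.det ≠ 0)
    (h : Cᵀ * M * C = N) (hM : M.det ≠ 0) (hN : N.det = 0) : False := by
  have hr := det_rel h
  rw [hN] at hr
  exact (mul_ne_zero (pow_ne_zero 2 hd) hM) hr

lemma nc_0d {C M N : Matrix (Fin 3) (Fin 3) F} (h : Cᵀ * M * C = N)
    (hM : M.det = 0) (hN : N.det ≠ 0) : False := by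
  have hr := det_rel h
  rw [hM, mul_zero] at hr
  exact hN hr.symm

end contra

lemma DM_sym (gv : F) (k : Fin 6) : (DM gv k)ᵀ = DM gv k := by
  fin_cases k <;> exact dm_transpose _ _ _

lemma uniq_aux {gv : F} (hgv : gv ≠ 0) (hg : ¬ IsSquare gv) (i j : Fin 6)
    (hc : Cong (DM gv i) (DM gv j)) : i = j := by
  obtain ⟨u, hu⟩ := hc
  have hd : ((u : Matrix (Fin 3) (Fin 3) F)).det ≠ 0 :=
    ((Matrix.isUnit_iff_isUnit_det _).1 u.isUnit).ne_zero
  set C : Matrix (Fin 3) (Fin 3) F := (u : Matrix (Fin 3) (Fin 3) F) with hC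
  fin_cases i <;> fin_cases j
  · rfl
  · exact absurd hu (fun hu => nc_01 hg C hu)
  · exact absurd hu (fun hu => nc_1r 1 1 0 one_ne_zero C hu)
  · exact absurd hu (fun hu => nc_1r 1 gv 0 hgv C hu)
  · exact absurd hu (fun hu => nc_1r 1 1 1 one_ne_zero C hu)
  · exact absurd hu (fun hu => nc_1r 1 gv 1 hgv C hu)
  · exact absurd hu (fun hu => nc_10 hg C hu)
  · rfl
  · exact absurd hu (fun hu => nc_1r gv 1 0 one_ne_zero C hu)
  · exact absurd hu (fun hu => nc_1r gv gv 0 hgv C hu)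
  · exact absurd hu (fun hu => nc_1r gv 1 1 one_ne_zero C hu)
  · exact absurd hu (fun hu => nc_1r gv gv 1 hgv C hu)
  · exact absurd hu (fun hu => nc_21 1 1 1 one_ne_zero one_ne_zero one_ne_zero C hd hu)
  · exact absurd hu (fun hu => nc_21 1 1 gv one_ne_zero one_ne_zero hgv C hd hu)
  · rfl
  · exact absurd hu (fun hu => nc_23 hg C hu)
  · exact absurd hu (fun hu => nc_0d hu (by simp [DM, dm_det]) (by simp [DM, dm_det]))
  · exact absurd hu (fun hu => nc_0d hu (by simp [DM, dm_det]) (by show ¬(dm gv 1 1).det = 0; rw [dm_det]; simp [hgv]))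
  · exact absurd hu (fun hu => nc_21 gv 1 1 hgv one_ne_zero one_ne_zero C hd hu)
  · exact absurd hu (fun hu => nc_21 gv 1 gv hgv one_ne_zero hgv C hd hu)
  · exact absurd hu (fun hu => nc_32 hg C hu)
  · rfl
  · exact absurd hu (fun hu => nc_0d hu (by simp [DM, dm_det]) (by simp [DM, dm_det]))
  · exact absurd hu (fun hu => nc_0d hu (by simp [DM, dm_det]) (by show ¬(dm gv 1 1).det = 0; rw [dm_det]; simp [hgv]))
  · exact absurd hu (fun hu => nc_d0 hd hu (by simp [DM, dm_det]) (by simp [DM, dm_det]))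
  · exact absurd hu (fun hu => nc_d0 hd hu (by simp [DM, dm_det]) (by simp [DM, dm_det]))
  · exact absurd hu (fun hu => nc_d0 hd hu (by simp [DM, dm_det]) (by simp [DM, dm_det]))
  · exact absurd hu (fun hu => nc_d0 hd hu (by simp [DM, dm_det]) (by simp [DM, dm_det]))
  · rfl
  · exact absurd hu (fun hu => nc_45 hg C hu)
  · exact absurd hu (fun hu => nc_d0 hd hu (by show ¬(dm gv 1 1).det = 0; rw [dm_det]; simp [hgv]) (by simp [DM, dm_det]))
  · exact absurd hu (fun hu => nc_d0 hd hu (by show ¬(dm gv 1 1).det = 0; rw [dm_det]; simp [hgv]) (by simp [DM, dm_det]))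
  · exact absurd hu (fun hu => nc_d0 hd hu (by show ¬(dm gv 1 1).det = 0; rw [dm_det]; simp [hgv]) (by simp [DM, dm_det]))
  · exact absurd hu (fun hu => nc_d0 hd hu (by show ¬(dm gv 1 1).det = 0; rw [dm_det]; simp [hgv]) (by simp [DM, dm_det]))
  · exact absurd hu (fun hu => nc_54 hg C hd hu)
  · rfl

lemma wSS_eq (w : Fin 3 → F) (x : Fin 3 → F) :
    QuadraticMap.weightedSumSquares F w x = x ⬝ᵥ ((dm (w 0) (w 1) (w 2)) *ᵥ x) := by
  simp only [QuadraticMap.weightedSumSquares_apply, dotProduct, Matrix.mulVec,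
    Fin.sum_univ_three, dm00, dm01, dm02, dm10, dm11, dm12, dm20, dm21, dm22, smul_eq_mul]
  ring

section zmod

variable {p : ℕ} [Fact p.Prime]

lemma sol (hodd : p % 2 = 1) (a b : ZMod p) (ha : a ≠ 0) (hb : b ≠ 0) :
    ∃ x y : ZMod p, a*x^2 + b*y^2 = 1 := by
  have hdf : (Polynomial.C a * Polynomial.X ^ 2 : Polynomial (ZMod p)).degree = 2 := by
    rw [Polynomial.degree_C_mul_X_pow 2 ha]; norm_cast
  have hdg : (Polynomial.C b * Polynomial.X ^ 2 - Polynomial.C 1 :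
      Polynomial (ZMod p)).degree = 2 := by
    rw [Polynomial.degree_sub_eq_left_of_degree_lt]
    · rw [Polynomial.degree_C_mul_X_pow 2 hb]; norm_cast
    · rw [Polynomial.degree_C_mul_X_pow 2 hb]
      apply lt_of_le_of_lt (Polynomial.degree_C_le)
      norm_num
  obtain ⟨x, y, hxy⟩ := FiniteField.exists_root_sum_quadratic hdf hdg (by rw [ZMod.card]; exact hodd)
  refine ⟨x, y, ?_⟩
  simp only [Polynomial.eval_mul, Polynomial.eval_pow, Polynomial.eval_C, Polynomial.eval_X,
    Polynomial.eval_sub, Polynomial.eval_one] at hxy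
  linear_combination hxy

lemma decomp {gv : ZMod p} (hgv : gv ≠ 0) (hg : ¬ IsSquare gv)
    (c : ZMod p) (hc : c ≠ 0) : ∃ u : ZMod p, u ≠ 0 ∧ (c * u^2 = 1 ∨ c * u^2 = gv) := by
  by_cases hs : IsSquare c
  · obtain ⟨r, hr⟩ := hs
    have hr0 : r ≠ 0 := by rintro rfl; rw [mul_zero] at hr; exact hc hr
    refine ⟨r⁻¹, inv_ne_zero hr0, Or.inl ?_⟩
    rw [hr, show (r*r)*(r⁻¹)^2 = (r * r⁻¹) * (r * r⁻¹) from by ring]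
    simp [mul_inv_cancel₀ hr0]
  · have hne : c * gv⁻¹ ≠ 0 := mul_ne_zero hc (inv_ne_zero hgv)
    have h1 : IsSquare (c * gv⁻¹) := by
      have hχc : quadraticChar (ZMod p) c = -1 := quadraticChar_neg_one_iff_not_isSquare.2 hs
      have hχg : quadraticChar (ZMod p) gv = -1 := quadraticChar_neg_one_iff_not_isSquare.2 hg
      apply (quadraticChar_one_iff_isSquare hne).1
      have hm : quadraticChar (ZMod p) (c * gv⁻¹) * quadraticChar (ZMod p) gv
          = quadraticChar (ZMod p) c := by
        rw [← _root_.map_mul]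
        congr 1
        field_simp
      rw [hχg, hχc] at hm
      linarith
    obtain ⟨r, hr⟩ := h1
    have hr0 : r ≠ 0 := by rintro rfl; rw [mul_zero] at hr; exact hne hr
    have hc2 : c = gv * (r * r) := by
      field_simp [hgv] at hr
      linear_combination hr
    refine ⟨r⁻¹, inv_ne_zero hr0, Or.inr ?_⟩
    rw [hc2, show gv * (r*r) * (r⁻¹)^2 = gv * ((r * r⁻¹) * (r * r⁻¹)) from by ring]
    simp [mul_inv_cancel₀ hr0]

variable {gv : ZMod p} (hodd : p % 2 = 1) (hgv : gv ≠ 0) (hg : ¬ IsSquare gv)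

include hgv hg in
lemma rank1 (c : ZMod p) (hc : c ≠ 0) : ∃ i : Fin 6, Cong (dm c 0 0) (DM gv i) := by
  obtain ⟨u, hu, hor⟩ := decomp hgv hg c hc
  have h1 := cong_scale c 0 0 u 1 1 hu one_ne_zero one_ne_zero
  simp only [zero_mul] at h1
  rcases hor with h | h <;> rw [h] at h1
  · exact ⟨0, h1⟩
  · exact ⟨1, h1⟩

include hodd hgv hg in
lemma rank2 (a b : ZMod p) (ha : a ≠ 0) (hb : b ≠ 0) :
    ∃ i : Fin 6, Cong (dm a b 0) (DM gv i) := by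
  obtain ⟨u, hu, hau⟩ := decomp hgv hg a ha
  obtain ⟨v, hv, hbv⟩ := decomp hgv hg b hb
  have h1 := cong_scale a b 0 u v 1 hu hv one_ne_zero
  simp only [zero_mul] at h1
  rcases hau with ha' | ha' <;> rcases hbv with hb' | hb' <;> rw [ha', hb'] at h1
  · exact ⟨2, h1⟩
  · exact ⟨3, cong_trans h1 (cong_swap01 1 gv 0)⟩
  · exact ⟨3, h1⟩
  · obtain ⟨x, y, hxy⟩ := sol hodd gv gv hgv hgv
    have h2 := cong_pair01 gv gv 0 x y hxy
    have h3 := cong_scale 1 (gv*gv) 0 1 gv⁻¹ 1 one_ne_zero (inv_ne_zero hgv) one_ne_zero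
    simp only [zero_mul, one_pow, mul_one] at h3
    rw [show gv*gv*(gv⁻¹)^2 = 1 by field_simp] at h3
    exact ⟨2, cong_trans h1 (cong_trans h2 h3)⟩

include hodd hgv hg in
lemma rank3 (a b c : ZMod p) (ha : a ≠ 0) (hb : b ≠ 0) (hc : c ≠ 0) :
    ∃ i : Fin 6, Cong (dm a b c) (DM gv i) := by
  obtain ⟨u, hu, hau⟩ := decomp hgv hg a ha
  obtain ⟨v, hv, hbv⟩ := decomp hgv hg b hb
  have h1 := cong_scale a b c u v 1 hu hv one_ne_zero  -- dummy; replaced below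
  clear h1
  obtain ⟨t, ht, hct⟩ := decomp hgv hg c hc
  have h1 := cong_scale a b c u v t hu hv ht
  obtain ⟨x, y, hxy⟩ := sol hodd gv gv hgv hgv
  have hsc : gv*gv*(gv⁻¹)^2 = 1 := by field_simp
  rcases hau with ha' | ha' <;> rcases hbv with hb' | hb' <;> rcases hct with hc' | hc' <;>
    rw [ha', hb', hc'] at h1
  · exact ⟨4, h1⟩
  · -- (1,1,gv)
    exact ⟨5, cong_trans h1 (cong_trans (cong_swap12 1 1 gv) (cong_swap01 1 gv 1))⟩
  · -- (1,gv,1)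
    exact ⟨5, cong_trans h1 (cong_swap01 1 gv 1)⟩
  · -- (1,gv,gv)
    have h2 := cong_pair12 1 gv gv x y hxy
    have h3 := cong_scale 1 1 (gv*gv) 1 1 gv⁻¹ one_ne_zero one_ne_zero (inv_ne_zero hgv)
    simp only [one_pow, mul_one] at h3
    rw [hsc] at h3
    exact ⟨4, cong_trans h1 (cong_trans h2 h3)⟩
  · -- (gv,1,1)
    exact ⟨5, h1⟩
  · -- (gv,1,gv)
    have h2 := cong_swap12 gv 1 gv
    have h3 := cong_pair01 gv gv 1 x y hxy
    have h4 := cong_scale 1 (gv*gv) 1 1 gv⁻¹ 1 one_ne_zero (inv_ne_zero hgv) one_ne_zero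
    simp only [one_pow, mul_one] at h4
    rw [hsc] at h4
    exact ⟨4, cong_trans h1 (cong_trans h2 (cong_trans h3 h4))⟩
  · -- (gv,gv,1)
    have h3 := cong_pair01 gv gv 1 x y hxy
    have h4 := cong_scale 1 (gv*gv) 1 1 gv⁻¹ 1 one_ne_zero (inv_ne_zero hgv) one_ne_zero
    simp only [one_pow, mul_one] at h4
    rw [hsc] at h4
    exact ⟨4, cong_trans h1 (cong_trans h3 h4)⟩
  · -- (gv,gv,gv)
    have h2 := cong_pair12 gv gv gv x y hxy
    have h3 := cong_scale gv 1 (gv*gv) 1 1 gv⁻¹ one_ne_zero one_ne_zero (inv_ne_zero hgv)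
    simp only [one_pow, mul_one] at h3
    rw [hsc] at h3
    exact ⟨5, cong_trans h1 (cong_trans h2 h3)⟩

include hodd hgv hg in
lemma classify (a b c : ZMod p) (h : ¬(a = 0 ∧ b = 0 ∧ c = 0)) :
    ∃ i : Fin 6, Cong (dm a b c) (DM gv i) := by
  by_cases ha : a = 0 <;> by_cases hb : b = 0 <;> by_cases hc : c = 0
  · exact absurd ⟨ha, hb, hc⟩ h
  · subst ha; subst hb
    obtain ⟨i, hi⟩ := rank1 hgv hg c hc
    exact ⟨i, cong_trans (cong_trans (cong_swap12 0 0 c) (cong_swap01 0 c 0)) hi⟩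
  · subst ha; subst hc
    obtain ⟨i, hi⟩ := rank1 hgv hg b hb
    exact ⟨i, cong_trans (cong_swap01 0 b 0) hi⟩
  · subst ha
    obtain ⟨i, hi⟩ := rank2 hodd hgv hg b c hb hc
    exact ⟨i, cong_trans (cong_trans (cong_swap01 0 b c) (cong_swap12 b 0 c)) hi⟩
  · subst hb; subst hc
    exact rank1 hgv hg a ha
  · subst hb
    obtain ⟨i, hi⟩ := rank2 hodd hgv hg a c ha hc
    exact ⟨i, cong_trans (cong_swap12 a 0 c) hi⟩
  · subst hc
    exact rank2 hodd hgv hg a b ha hb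
  · exact rank3 hodd hgv hg a b c ha hb hc

end zmod

end QFClassify

open QFClassify in
theorem quadratic_form_three_vars_classification (p : ℕ) (hp : p.Prime) (hodd : Odd p)
    (g : (ZMod p)ˣ) (hg : ¬ IsSquare (g : ZMod p))
    (Q : QuadraticForm (ZMod p) (Fin 3 → ZMod p)) (hQ : Q ≠ 0) :
    ∃! i : Fin 6,
      ∃ A : Matrix.GeneralLinearGroup (Fin 3) (ZMod p),
        ∀ v : Fin 3 → ZMod p,
          Q v =
            (![QuadraticMap.weightedSumSquares (ZMod p) ![1, 0, 0],
               QuadraticMap.weightedSumSquares (ZMod p) ![(g : ZMod p), 0, 0],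
               QuadraticMap.weightedSumSquares (ZMod p) ![1, 1, 0],
               QuadraticMap.weightedSumSquares (ZMod p) ![(g : ZMod p), 1, 0],
               QuadraticMap.weightedSumSquares (ZMod p) ![1, 1, 1],
               QuadraticMap.weightedSumSquares (ZMod p) ![(g : ZMod p), 1, 1]] i)
              ((A : Matrix (Fin 3) (Fin 3) (ZMod p)).mulVec v) := by
  classical
  haveI : Fact p.Prime := ⟨hp⟩
  have hp2 : p ≠ 2 := by rintro rfl; rw [Nat.odd_iff] at hodd; norm_num at hodd
  have h2 : (2 : ZMod p) ≠ 0 := by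
    intro h
    have h' : ((2:ℕ) : ZMod p) = 0 := by exact_mod_cast h
    rw [CharP.cast_eq_zero_iff (ZMod p) p 2] at h'
    exact hp2 ((Nat.prime_dvd_prime_iff_eq hp Nat.prime_two).1 h')
  haveI := invertibleOfNonzero h2
  set gv : ZMod p := (g : ZMod p) with hgvdef
  have hgv : gv ≠ 0 := g.ne_zero
  have hoddm : p % 2 = 1 := Nat.odd_iff.mp hodd
  -- diagonalize Q
  obtain ⟨w, ⟨f⟩⟩ := QuadraticForm.equivalent_weightedSumSquares Q
  have hn : Module.finrank (ZMod p) (Fin 3 → ZMod p) = 3 := Module.finrank_fin_fun _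
  set σ : Fin 3 ≃ Fin (Module.finrank (ZMod p) (Fin 3 → ZMod p)) := finCongr hn.symm with hσ
  set e := f.toLinearEquiv.trans
    (LinearEquiv.funCongrLeft (ZMod p) (ZMod p) σ) with he
  set w' : Fin 3 → ZMod p := fun i => w (σ i) with hw'
  have hev : ∀ (v : Fin 3 → ZMod p) (i : Fin 3), e v i = f v (σ i) := by
    intro v i
    simp [he, LinearEquiv.funCongrLeft_apply, LinearMap.funLeft_apply]
  have hQw : ∀ v, Q v = QuadraticMap.weightedSumSquares (ZMod p) w' (e v) := by
    intro v
    rw [← f.map_app v]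
    simp only [QuadraticMap.weightedSumSquares_apply]
    refine (Fintype.sum_equiv σ _ _ fun i => ?_).symm
    rw [hev v i]
  -- the matrix of e
  set A : Matrix (Fin 3) (Fin 3) (ZMod p) :=
    LinearMap.toMatrix' (e : (Fin 3 → ZMod p) →ₗ[ZMod p] (Fin 3 → ZMod p)) with hA
  set A' : Matrix (Fin 3) (Fin 3) (ZMod p) :=
    LinearMap.toMatrix' (e.symm : (Fin 3 → ZMod p) →ₗ[ZMod p] (Fin 3 → ZMod p)) with hA'
  have hAv : ∀ v, A *ᵥ v = e v := by
    intro v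
    rw [hA, ← Matrix.toLin'_apply, Matrix.toLin'_toMatrix']
    rfl
  have hAA' : A * A' = 1 := by
    rw [hA, hA', ← LinearMap.toMatrix'_comp]
    have hcomp : (e : (Fin 3 → ZMod p) →ₗ[ZMod p] (Fin 3 → ZMod p)) ∘ₗ
        (e.symm : (Fin 3 → ZMod p) →ₗ[ZMod p] (Fin 3 → ZMod p)) = LinearMap.id := by
      ext x; simp
    rw [hcomp, LinearMap.toMatrix'_id]
  have hA'A : A' * A = 1 := by
    rw [hA, hA', ← LinearMap.toMatrix'_comp]
    have hcomp : (e.symm : (Fin 3 → ZMod p) →ₗ[ZMod p] (Fin 3 → ZMod p)) ∘ₗ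
        (e : (Fin 3 → ZMod p) →ₗ[ZMod p] (Fin 3 → ZMod p)) = LinearMap.id := by
      ext x; simp
    rw [hcomp, LinearMap.toMatrix'_id]
  set uA : (Matrix (Fin 3) (Fin 3) (ZMod p))ˣ := ⟨A, A', hAA', hA'A⟩ with huA
  -- w' is not identically zero
  have hw0 : ¬ (w' 0 = 0 ∧ w' 1 = 0 ∧ w' 2 = 0) := by
    rintro ⟨h0, h1', h2'⟩
    apply hQ
    ext v
    rw [hQw v]
    simp [QuadraticMap.weightedSumSquares_apply, Fin.sum_univ_three, h0, h1', h2']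
  obtain ⟨i0, u, hu⟩ := classify hoddm hgv hg (w' 0) (w' 1) (w' 2) hw0
  -- evaluation of the six forms
  have hform : ∀ (k : Fin 6) (x : Fin 3 → ZMod p),
      (![QuadraticMap.weightedSumSquares (ZMod p) ![1, 0, 0],
         QuadraticMap.weightedSumSquares (ZMod p) ![(g : ZMod p), 0, 0],
         QuadraticMap.weightedSumSquares (ZMod p) ![1, 1, 0],
         QuadraticMap.weightedSumSquares (ZMod p) ![(g : ZMod p), 1, 0],
         QuadraticMap.weightedSumSquares (ZMod p) ![1, 1, 1],
         QuadraticMap.weightedSumSquares (ZMod p) ![(g : ZMod p), 1, 1]] k) x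
        = x ⬝ᵥ ((DM gv k) *ᵥ x) := by
    intro k x
    fin_cases k
    · show QuadraticMap.weightedSumSquares (ZMod p) ![1,0,0] x = x ⬝ᵥ ((dm 1 0 0) *ᵥ x)
      simp [QuadraticMap.weightedSumSquares_apply, dotProduct, Matrix.mulVec, dm, DM,
        Fin.sum_univ_three, Matrix.vecHead, Matrix.vecTail, smul_eq_mul]
      try ring1
    · show QuadraticMap.weightedSumSquares (ZMod p) ![gv,0,0] x = x ⬝ᵥ ((dm gv 0 0) *ᵥ x)
      simp [QuadraticMap.weightedSumSquares_apply, dotProduct, Matrix.mulVec, dm, DM,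
        Fin.sum_univ_three, Matrix.vecHead, Matrix.vecTail, smul_eq_mul]
      try ring1
    · show QuadraticMap.weightedSumSquares (ZMod p) ![1,1,0] x = x ⬝ᵥ ((dm 1 1 0) *ᵥ x)
      simp [QuadraticMap.weightedSumSquares_apply, dotProduct, Matrix.mulVec, dm, DM,
        Fin.sum_univ_three, Matrix.vecHead, Matrix.vecTail, smul_eq_mul]
      try ring1
    · show QuadraticMap.weightedSumSquares (ZMod p) ![gv,1,0] x = x ⬝ᵥ ((dm gv 1 0) *ᵥ x)
      simp [QuadraticMap.weightedSumSquares_apply, dotProduct, Matrix.mulVec, dm, DM,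
        Fin.sum_univ_three, Matrix.vecHead, Matrix.vecTail, smul_eq_mul]
      try ring1
    · show QuadraticMap.weightedSumSquares (ZMod p) ![1,1,1] x = x ⬝ᵥ ((dm 1 1 1) *ᵥ x)
      simp [QuadraticMap.weightedSumSquares_apply, dotProduct, Matrix.mulVec, dm, DM,
        Fin.sum_univ_three, Matrix.vecHead, Matrix.vecTail, smul_eq_mul]
      try ring1
    · show QuadraticMap.weightedSumSquares (ZMod p) ![gv,1,1] x = x ⬝ᵥ ((dm gv 1 1) *ᵥ x)
      simp [QuadraticMap.weightedSumSquares_apply, dotProduct, Matrix.mulVec, dm, DM,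
        Fin.sum_univ_three, Matrix.vecHead, Matrix.vecTail, smul_eq_mul]
      try ring1
  -- existence witness
  set Ai : (Matrix (Fin 3) (Fin 3) (ZMod p))ˣ := u⁻¹ * uA with hAi
  have hex : ∀ v : Fin 3 → ZMod p, Q v =
      ((Ai : Matrix (Fin 3) (Fin 3) (ZMod p)) *ᵥ v) ⬝ᵥ
        ((DM gv i0) *ᵥ ((Ai : Matrix (Fin 3) (Fin 3) (ZMod p)) *ᵥ v)) := by
    intro v
    rw [← hu, quad_congr]
    have hx : (u : Matrix (Fin 3) (Fin 3) (ZMod p)) *ᵥ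
        ((Ai : Matrix (Fin 3) (Fin 3) (ZMod p)) *ᵥ v) = A *ᵥ v := by
      rw [Matrix.mulVec_mulVec]
      congr 1
      have : (Ai : Matrix (Fin 3) (Fin 3) (ZMod p)) =
          ((u⁻¹ : (Matrix (Fin 3) (Fin 3) (ZMod p))ˣ) : Matrix (Fin 3) (Fin 3) (ZMod p)) * A := rfl
      rw [this, ← Matrix.mul_assoc]
      have h1 : (u : Matrix (Fin 3) (Fin 3) (ZMod p)) *
          ((u⁻¹ : (Matrix (Fin 3) (Fin 3) (ZMod p))ˣ) : Matrix (Fin 3) (Fin 3) (ZMod p)) = 1 :=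
        u.mul_inv
      rw [h1, Matrix.one_mul]
    rw [hx, hAv, ← wSS_eq]
    exact hQw v
  refine ⟨i0, ⟨Ai, ?_⟩, ?_⟩
  · intro v
    rw [hform i0]
    exact hex v
  · rintro j ⟨B, hB⟩
    have hBq : ∀ v : Fin 3 → ZMod p, v ⬝ᵥ
        (((B : Matrix (Fin 3) (Fin 3) (ZMod p))ᵀ * DM gv j *
          (B : Matrix (Fin 3) (Fin 3) (ZMod p))) *ᵥ v)
        = v ⬝ᵥ (((Ai : Matrix (Fin 3) (Fin 3) (ZMod p))ᵀ * DM gv i0 *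
          (Ai : Matrix (Fin 3) (Fin 3) (ZMod p))) *ᵥ v) := by
      intro v
      rw [quad_congr, quad_congr, ← hform j, ← hB v]
      exact hex v
    have hsym : ∀ (X : Matrix (Fin 3) (Fin 3) (ZMod p)) (k : Fin 6),
        (Xᵀ * DM gv k * X)ᵀ = Xᵀ * DM gv k * X := by
      intro X k
      rw [Matrix.transpose_mul, Matrix.transpose_mul, Matrix.transpose_transpose, DM_sym,
        Matrix.mul_assoc]
    have heq : (B : Matrix (Fin 3) (Fin 3) (ZMod p))ᵀ * DM gv j *
        (B : Matrix (Fin 3) (Fin 3) (ZMod p))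
        = (Ai : Matrix (Fin 3) (Fin 3) (ZMod p))ᵀ * DM gv i0 *
          (Ai : Matrix (Fin 3) (Fin 3) (ZMod p)) :=
      sym_eq h2 (hsym _ _) (hsym _ _) hBq
    have hcong : Cong (DM gv i0) (DM gv j) := by
      refine ⟨Ai * B⁻¹, ?_⟩
      have hW : ((Ai * B⁻¹ : (Matrix (Fin 3) (Fin 3) (ZMod p))ˣ) :
          Matrix (Fin 3) (Fin 3) (ZMod p))
          = (Ai : Matrix (Fin 3) (Fin 3) (ZMod p)) *
            ((B⁻¹ : (Matrix (Fin 3) (Fin 3) (ZMod p))ˣ) : Matrix (Fin 3) (Fin 3) (ZMod p)) := rfl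
      rw [hW, Matrix.transpose_mul]
      calc ((B⁻¹ : (Matrix (Fin 3) (Fin 3) (ZMod p))ˣ) : Matrix (Fin 3) (Fin 3) (ZMod p))ᵀ *
            (Ai : Matrix (Fin 3) (Fin 3) (ZMod p))ᵀ * DM gv i0 *
            ((Ai : Matrix (Fin 3) (Fin 3) (ZMod p)) *
              ((B⁻¹ : (Matrix (Fin 3) (Fin 3) (ZMod p))ˣ) : Matrix (Fin 3) (Fin 3) (ZMod p)))
          = ((B⁻¹ : (Matrix (Fin 3) (Fin 3) (ZMod p))ˣ) : Matrix (Fin 3) (Fin 3) (ZMod p))ᵀ *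
            ((Ai : Matrix (Fin 3) (Fin 3) (ZMod p))ᵀ * DM gv i0 *
              (Ai : Matrix (Fin 3) (Fin 3) (ZMod p))) *
            ((B⁻¹ : (Matrix (Fin 3) (Fin 3) (ZMod p))ˣ) : Matrix (Fin 3) (Fin 3) (ZMod p)) := by
            noncomm_ring
        _ = ((B⁻¹ : (Matrix (Fin 3) (Fin 3) (ZMod p))ˣ) : Matrix (Fin 3) (Fin 3) (ZMod p))ᵀ *
            ((B : Matrix (Fin 3) (Fin 3) (ZMod p))ᵀ * DM gv j *
              (B : Matrix (Fin 3) (Fin 3) (ZMod p))) *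
            ((B⁻¹ : (Matrix (Fin 3) (Fin 3) (ZMod p))ˣ) : Matrix (Fin 3) (Fin 3) (ZMod p)) := by
            rw [← heq]
        _ = (((B : Matrix (Fin 3) (Fin 3) (ZMod p)) *
              ((B⁻¹ : (Matrix (Fin 3) (Fin 3) (ZMod p))ˣ) :
                Matrix (Fin 3) (Fin 3) (ZMod p)))ᵀ) * DM gv j *
            ((B : Matrix (Fin 3) (Fin 3) (ZMod p)) *
              ((B⁻¹ : (Matrix (Fin 3) (Fin 3) (ZMod p))ˣ) :
                Matrix (Fin 3) (Fin 3) (ZMod p))) := by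
            rw [Matrix.transpose_mul]; noncomm_ring
        _ = DM gv j := by rw [B.mul_inv]; simp
    exact (uniq_aux hgv hg i0 j hcong).symm
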